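/- Let R be a graded-commutative ring such that R is Noetherian. Then the even-degree subring π_even(R) is Noetherian, and the odd part π_odd(R) is a finitely generated module over π_even(R). -/

import Mathlib

section Aux

variable {R : Type*} [Ring R] (𝒜 : ℤ → AddSubgroup R) [GradedRing 𝒜]

open DirectSum

/-- The `i`-th graded component, as an additive monoid hom `R →+ R`. -/
noncomputable def gcCpt (i : ℤ) : R →+ R :=
  ((𝒜 i).subtype.comp (DFinsupp.evalAddMonoidHom i)).comp
    (DirectSum.decomposeAddEquiv 𝒜).toAddMonoidHom

lemma gcCpt_apply (i : ℤ) (x : R) : gcCpt 𝒜 i x = (DirectSum.decompose 𝒜 x i : R) := rfl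

/-- Projection onto the components whose degree satisfies `P`. -/
noncomputable def gcProj (P : ℤ → Prop) [DecidablePred P] : R →+ R :=
  (DirectSum.toAddMonoid (fun i => if P i then (𝒜 i).subtype else 0)).comp
    (DirectSum.decomposeAddEquiv 𝒜).toAddMonoidHom

lemma gcProj_of_mem (P : ℤ → Prop) [DecidablePred P] {i : ℤ} {x : R} (hx : x ∈ 𝒜 i) :
    gcProj 𝒜 P x = if P i then x else 0 := by
  have : gcProj 𝒜 P x =
      (if P i then (𝒜 i).subtype else 0) (⟨x, hx⟩ : 𝒜 i) := by
    simp only [gcProj, AddMonoidHom.comp_apply, AddEquiv.coe_toAddMonoidHom,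
      DirectSum.decomposeAddEquiv_apply, DirectSum.decompose_of_mem 𝒜 hx,
      DirectSum.toAddMonoid_of]
  rw [this]
  split <;> simp

noncomputable def projE : R →+ R := gcProj 𝒜 (fun i => Even i)

noncomputable def projO : R →+ R := gcProj 𝒜 (fun i => ¬ Even i)

lemma sum_cpt (x : R) [∀ (i : ℤ) (y : 𝒜 i), Decidable (y ≠ 0)] :
    ∑ i ∈ (DirectSum.decompose 𝒜 x).support, gcCpt 𝒜 i x = x := by
  simpa only [gcCpt_apply] using DirectSum.sum_support_decompose 𝒜 x

lemma projE_mem (x : R) :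
    projE 𝒜 x ∈ Subring.closure {r : R | ∃ n : ℤ, r ∈ 𝒜 (2 * n)} := by
  induction x using DirectSum.Decomposition.inductionOn 𝒜 with
  | zero => simp only [map_zero]; exact zero_mem _
  | @homogeneous i m =>
    rw [projE, gcProj_of_mem 𝒜 _ m.2]
    split
    · rename_i h
      obtain ⟨n, hn⟩ := h
      exact Subring.subset_closure ⟨n, by rw [two_mul, ← hn]; exact m.2⟩
    · exact zero_mem _
  | add a b ha hb => rw [map_add]; exact add_mem ha hb

lemma projE_eq_self {x : R} (hx : ∀ i, ¬ Even i → gcCpt 𝒜 i x = 0) :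
    projE 𝒜 x = x := by
  classical
  conv_lhs => rw [← sum_cpt 𝒜 x]
  rw [map_sum]
  conv_rhs => rw [← sum_cpt 𝒜 x]
  refine Finset.sum_congr rfl fun i _ => ?_
  rw [projE, gcProj_of_mem 𝒜 _ (show gcCpt 𝒜 i x ∈ 𝒜 i from (DirectSum.decompose 𝒜 x i).2)]
  by_cases h : Even i
  · rw [if_pos h]
  · rw [if_neg h, hx i h]

lemma projO_eq_self {x : R} (hx : ∀ i, Even i → gcCpt 𝒜 i x = 0) :
    projO 𝒜 x = x := by
  classical
  conv_lhs => rw [← sum_cpt 𝒜 x]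
  rw [map_sum]
  conv_rhs => rw [← sum_cpt 𝒜 x]
  refine Finset.sum_congr rfl fun i _ => ?_
  rw [projO, gcProj_of_mem 𝒜 _ (show gcCpt 𝒜 i x ∈ 𝒜 i from (DirectSum.decompose 𝒜 x i).2)]
  by_cases h : Even i
  · rw [if_neg (not_not_intro h), hx i h]
  · rw [if_pos h]

lemma mulE_hom {j k : ℤ} (hk : Even k) {r a : R} (hr : r ∈ 𝒜 j) (ha : a ∈ 𝒜 k) :
    projE 𝒜 (r * a) = projE 𝒜 r * a := by
  have hmem : r * a ∈ 𝒜 (j + k) := SetLike.mul_mem_graded hr ha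
  rw [projE, gcProj_of_mem 𝒜 _ hmem, gcProj_of_mem 𝒜 _ hr]
  have hiff : Even (j + k) ↔ Even j := by
    rw [Int.even_add]; exact ⟨fun h => h.mpr hk, fun h => iff_of_true h hk⟩
  by_cases hj : Even j
  · rw [if_pos (hiff.mpr hj), if_pos hj]
  · rw [if_neg (fun h => hj (hiff.mp h)), if_neg hj, zero_mul]

lemma mulO_hom {j k : ℤ} (hk : ¬ Even k) {r a : R} (hr : r ∈ 𝒜 j) (ha : a ∈ 𝒜 k) :
    projO 𝒜 (r * a) = projE 𝒜 r * a := by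
  have hmem : r * a ∈ 𝒜 (j + k) := SetLike.mul_mem_graded hr ha
  rw [projO, projE, gcProj_of_mem 𝒜 _ hmem, gcProj_of_mem 𝒜 _ hr]
  by_cases hj : Even j
  · rw [if_pos (fun h => hk ((Int.even_add.mp h).mp hj)), if_pos hj]
  · rw [if_neg (not_not_intro (Int.even_add.mpr (iff_of_false hj hk))), if_neg hj, zero_mul]

lemma mulE_hom' {k : ℤ} (hk : Even k) {a : R} (ha : a ∈ 𝒜 k) (r : R) :
    projE 𝒜 (r * a) = projE 𝒜 r * a := by
  induction r using DirectSum.Decomposition.inductionOn 𝒜 with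
  | zero => simp
  | @homogeneous i m => exact mulE_hom 𝒜 hk m.2 ha
  | add x y hx hy => rw [add_mul, map_add, hx, hy, map_add, add_mul]

lemma mulO_hom' {k : ℤ} (hk : ¬ Even k) {a : R} (ha : a ∈ 𝒜 k) (r : R) :
    projO 𝒜 (r * a) = projE 𝒜 r * a := by
  induction r using DirectSum.Decomposition.inductionOn 𝒜 with
  | zero => simp
  | @homogeneous i m => exact mulO_hom 𝒜 hk m.2 ha
  | add x y hx hy => rw [add_mul, map_add, hx, hy, map_add, add_mul]

lemma mulE (r a : R) (ha : ∀ i, ¬ Even i → gcCpt 𝒜 i a = 0) :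
    projE 𝒜 (r * a) = projE 𝒜 r * a := by
  classical
  calc projE 𝒜 (r * a) = projE 𝒜 (∑ i ∈ (DirectSum.decompose 𝒜 a).support,
        r * gcCpt 𝒜 i a) := by rw [← Finset.mul_sum, sum_cpt]
    _ = ∑ i ∈ (DirectSum.decompose 𝒜 a).support, projE 𝒜 (r * gcCpt 𝒜 i a) := map_sum _ _ _
    _ = ∑ i ∈ (DirectSum.decompose 𝒜 a).support, projE 𝒜 r * gcCpt 𝒜 i a := by
        refine Finset.sum_congr rfl fun i _ => ?_
        by_cases h : Even i
        · exact mulE_hom' 𝒜 h (by rw [gcCpt_apply]; exact (DirectSum.decompose 𝒜 a i).2) r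
        · rw [ha i h, mul_zero, mul_zero, map_zero]
    _ = projE 𝒜 r * a := by rw [← Finset.mul_sum, sum_cpt]

lemma mulO (r a : R) (ha : ∀ i, Even i → gcCpt 𝒜 i a = 0) :
    projO 𝒜 (r * a) = projE 𝒜 r * a := by
  classical
  calc projO 𝒜 (r * a) = projO 𝒜 (∑ i ∈ (DirectSum.decompose 𝒜 a).support,
        r * gcCpt 𝒜 i a) := by rw [← Finset.mul_sum, sum_cpt]
    _ = ∑ i ∈ (DirectSum.decompose 𝒜 a).support, projO 𝒜 (r * gcCpt 𝒜 i a) := map_sum _ _ _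
    _ = ∑ i ∈ (DirectSum.decompose 𝒜 a).support, projE 𝒜 r * gcCpt 𝒜 i a := by
        refine Finset.sum_congr rfl fun i _ => ?_
        by_cases h : Even i
        · rw [ha i h, mul_zero, mul_zero, map_zero]
        · exact mulO_hom' 𝒜 h (by rw [gcCpt_apply]; exact (DirectSum.decompose 𝒜 a i).2) r
    _ = projE 𝒜 r * a := by rw [← Finset.mul_sum, sum_cpt]

lemma cpt_mul_zero {a b : R} (ha : ∀ i, ¬ Even i → gcCpt 𝒜 i a = 0)
    (hb : ∀ i, ¬ Even i → gcCpt 𝒜 i b = 0) :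
    ∀ i, ¬ Even i → gcCpt 𝒜 i (a * b) = 0 := by
  classical
  intro i hi
  have hab : a * b = ∑ j ∈ (DirectSum.decompose 𝒜 a).support,
      ∑ k ∈ (DirectSum.decompose 𝒜 b).support, gcCpt 𝒜 j a * gcCpt 𝒜 k b := by
    rw [← Finset.sum_mul_sum, sum_cpt, sum_cpt]
  rw [hab, map_sum]
  refine Finset.sum_eq_zero fun j _ => ?_
  rw [map_sum]
  refine Finset.sum_eq_zero fun k _ => ?_
  by_cases hj : Even j
  · by_cases hk : Even k
    · have hmem : gcCpt 𝒜 j a * gcCpt 𝒜 k b ∈ 𝒜 (j + k) := by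
        rw [gcCpt_apply, gcCpt_apply]
        exact SetLike.mul_mem_graded (DirectSum.decompose 𝒜 a j).2 (DirectSum.decompose 𝒜 b k).2
      rw [gcCpt_apply]
      exact DirectSum.decompose_of_mem_ne 𝒜 hmem (fun h => hi (h ▸ hj.add hk))
    · rw [hb k hk, mul_zero, map_zero]
  · rw [ha j hj, zero_mul, map_zero]

lemma mem_even_iff (x : R) :
    x ∈ Subring.closure {r : R | ∃ n : ℤ, r ∈ 𝒜 (2 * n)} ↔
      ∀ i, ¬ Even i → gcCpt 𝒜 i x = 0 := by
  classical
  constructor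
  · intro hx
    refine Subring.closure_induction (fun y hy i hi => ?_) (fun i hi => ?_) (fun i hi => ?_)
      (fun y z _ _ hy hz i hi => ?_) (fun y _ hy i hi => ?_)
      (fun y z hy hz hy' hz' => cpt_mul_zero 𝒜 hy' hz') hx
    · obtain ⟨n, hn⟩ := hy
      rw [gcCpt_apply]
      exact DirectSum.decompose_of_mem_ne 𝒜 hn (fun h => hi (h ▸ ⟨n, two_mul n⟩))
    · simp
    · rw [gcCpt_apply]
      exact DirectSum.decompose_of_mem_ne 𝒜 (SetLike.one_mem_graded 𝒜)
        (fun h => hi (h ▸ Even.zero))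
    · rw [map_add, hy i hi, hz i hi, add_zero]
    · rw [map_neg, hy i hi, neg_zero]
  · intro hx
    rw [show x = ∑ i ∈ (DirectSum.decompose 𝒜 x).support, gcCpt 𝒜 i x from (sum_cpt 𝒜 x).symm]
    refine sum_mem fun i _ => ?_
    by_cases h : Even i
    · obtain ⟨n, hn⟩ := h
      refine Subring.subset_closure ⟨n, ?_⟩
      rw [gcCpt_apply, two_mul, ← hn]
      exact (DirectSum.decompose 𝒜 x i).2
    · rw [hx i h]; exact zero_mem _

lemma mem_odd_iff (x : R) :
    x ∈ AddSubgroup.closure {r : R | ∃ n : ℤ, r ∈ 𝒜 (2 * n + 1)} ↔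
      ∀ i, Even i → gcCpt 𝒜 i x = 0 := by
  classical
  constructor
  · intro hx
    refine AddSubgroup.closure_induction (fun y hy i hi => ?_) (fun i hi => ?_)
      (fun y z _ _ hy hz i hi => ?_) (fun y _ hy i hi => ?_) hx
    · obtain ⟨n, hn⟩ := hy
      rw [gcCpt_apply]
      refine DirectSum.decompose_of_mem_ne 𝒜 hn (fun h => ?_)
      obtain ⟨m, hm⟩ := hi
      omega
    · simp
    · rw [map_add, hy i hi, hz i hi, add_zero]
    · rw [map_neg, hy i hi, neg_zero]
  · intro hx
    rw [show x = ∑ i ∈ (DirectSum.decompose 𝒜 x).support, gcCpt 𝒜 i x from (sum_cpt 𝒜 x).symm]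
    refine sum_mem fun i hi => ?_
    by_cases h : Even i
    · rw [hx i h]; exact zero_mem _
    · obtain ⟨n, hn⟩ := Int.not_even_iff_odd.mp h
      refine AddSubgroup.subset_closure ⟨n, ?_⟩
      rw [gcCpt_apply, ← hn]
      exact (DirectSum.decompose 𝒜 x i).2

end Aux

/-- Let `R` be a `ℤ`-graded ring which is graded-commutative
(`x * y = (-1)^(|x||y|) * (y * x)` for homogeneous `x`, `y`).  If `R` is Noetherian,
then the even-degree subring `π_even R` is Noetherian, and the odd part `π_odd R`
is a finitely generated module over `π_even R`. -/
theorem stmt_1 {R : Type*} [Ring R] (𝒜 : ℤ → AddSubgroup R) [GradedRing 𝒜]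
    (hgc : ∀ (i j : ℤ) (x y : R), x ∈ 𝒜 i → y ∈ 𝒜 j →
      x * y = ((-1 : ℤˣ) ^ (i * j) : ℤˣ) • (y * x))
    (Reven : Subring R)
    (hReven : Reven = Subring.closure {r : R | ∃ n : ℤ, r ∈ 𝒜 (2 * n)})
    (Rodd : AddSubgroup R)
    (hRodd : Rodd = AddSubgroup.closure {r : R | ∃ n : ℤ, r ∈ 𝒜 (2 * n + 1)})
    (hNoeth : IsNoetherianRing R) :
    IsNoetherianRing Reven ∧
      ∃ s : Finset R, (↑s : Set R) ⊆ (Rodd : Set R) ∧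
        ∀ x ∈ Rodd, ∃ c : R → R, (∀ a ∈ s, c a ∈ Reven) ∧ x = ∑ a ∈ s, c a * a := by
  classical
  subst hReven hRodd
  set E : Subring R := Subring.closure {r : R | ∃ n : ℤ, r ∈ 𝒜 (2 * n)} with hE
  set O : AddSubgroup R := AddSubgroup.closure {r : R | ∃ n : ℤ, r ∈ 𝒜 (2 * n + 1)} with hO
  constructor
  · -- Noetherianity of the even subring
    rw [isNoetherianRing_iff, isNoetherian_iff]
    have hwf : WellFounded ((· > ·) : Ideal R → Ideal R → Prop) :=
      isNoetherian_iff.mp (isNoetherianRing_iff.mp hNoeth)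
    set f : Ideal E → Ideal R := fun I => I.map E.subtype with hf
    have key : ∀ (I : Ideal E) (x : E), (↑x : R) ∈ f I → x ∈ I := by
      intro I x hx
      have hx' : (↑x : R) ∈ Submodule.span R (⇑E.subtype '' (I : Set E)) := hx
      rw [Submodule.mem_span_set] at hx'
      obtain ⟨c, hsupp, hsum⟩ := hx'
      have hrep : ∀ a ∈ c.support, ∃ z : E, z ∈ I ∧ (↑z : R) = projE 𝒜 (c a) * a := by
        intro a ha
        obtain ⟨z, hzI, hza⟩ := hsupp ha
        refine ⟨⟨projE 𝒜 (c a), projE_mem 𝒜 (c a)⟩ * z, I.mul_mem_left _ hzI, ?_⟩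
        push_cast
        exact congrArg (fun y => projE 𝒜 (c a) * y) hza
      choose z hzI hz using hrep
      have hxval : (↑x : R) = ∑ a ∈ c.support.attach, (↑(z a.1 a.2) : R) := by
        have h1 : (↑x : R) = ∑ a ∈ c.support, c a * a := by
          rw [← hsum, Finsupp.sum]
          rfl
        have h2 : projE 𝒜 (↑x : R) = ↑x := projE_eq_self 𝒜 ((mem_even_iff 𝒜 _).mp x.2)
        calc (↑x : R) = projE 𝒜 (↑x : R) := h2.symm
          _ = ∑ a ∈ c.support, projE 𝒜 (c a * a) := by rw [h1, map_sum]
          _ = ∑ a ∈ c.support, projE 𝒜 (c a) * a := by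
              refine Finset.sum_congr rfl fun a ha => ?_
              obtain ⟨w, _, hwa⟩ := hsupp ha
              exact mulE 𝒜 (c a) a (hwa ▸ (mem_even_iff 𝒜 _).mp w.2)
          _ = ∑ a ∈ c.support.attach, (↑(z a.1 a.2) : R) := by
              rw [← Finset.sum_attach c.support (fun a => projE 𝒜 (c a) * a)]
              exact Finset.sum_congr rfl fun a _ => (hz a.1 a.2).symm
      have : x = ∑ a ∈ c.support.attach, z a.1 a.2 := by
        apply Subtype.coe_injective
        show (↑x : R) = ((↑(∑ a ∈ c.support.attach, z a.1 a.2) : R))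
        rw [hxval]
        push_cast
        rfl
      rw [this]
      exact Submodule.sum_mem I fun a _ => hzI a.1 a.2
    have hinj : Function.Injective f := by
      intro I J h
      refine le_antisymm (fun x hx => key J x ?_) (fun x hx => key I x ?_)
      · rw [← h]; exact Ideal.mem_map_of_mem _ hx
      · rw [h]; exact Ideal.mem_map_of_mem _ hx
    have hsm : StrictMono f := by
      intro I J hIJ
      exact lt_of_le_of_ne (Ideal.map_mono hIJ.le) (fun h => hIJ.ne (hinj h))
    exact Subrelation.wf (fun {a b} h => hsm h) (InvImage.wf f hwf)
  · -- Finite generation of the odd part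
    set J : Ideal R := Submodule.span R (O : Set R) with hJ
    have hJfg : J.FG := (isNoetherianRing_iff.mp hNoeth).noetherian J
    obtain ⟨t, ht⟩ := hJfg
    have ht' : Submodule.span R (↑t : Set R) = J := ht
    have hmem : ∀ g ∈ t, g ∈ Submodule.span R (O : Set R) := by
      intro g hg
      rw [← hJ, ← ht']
      exact Submodule.subset_span hg
    have hrep : ∀ g ∈ t, ∃ cg : R →₀ R, (cg.support : Set R) ⊆ (O : Set R) ∧
        (cg.sum fun mi r => r • mi) = g :=
      fun g hg => Submodule.mem_span_set.mp (hmem g hg)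
    choose cg hcg1 hcg2 using hrep
    set s : Finset R := t.attach.biUnion (fun g => (cg g.1 g.2).support) with hs
    have hsub : (↑s : Set R) ⊆ (O : Set R) := by
      intro a ha
      rw [hs, Finset.coe_biUnion] at ha
      simp only [Set.mem_iUnion, Finset.mem_coe] at ha
      obtain ⟨g, _, hga⟩ := ha
      exact hcg1 g.1 g.2 hga
    have hspan : Submodule.span R (↑s : Set R) = J := by
      refine le_antisymm (Submodule.span_le.mpr (hsub.trans Submodule.subset_span)) ?_
      rw [← ht']
      refine Submodule.span_le.mpr fun g hg => ?_
      rw [← hcg2 g hg, Finsupp.sum]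
      refine Submodule.sum_mem _ fun a ha => Submodule.smul_mem _ _ (Submodule.subset_span ?_)
      rw [hs]
      simp only [Finset.coe_biUnion, Set.mem_iUnion, Finset.mem_coe]
      exact ⟨⟨g, hg⟩, Finset.mem_attach _ _, ha⟩
    refine ⟨s, hsub, fun x hx => ?_⟩
    have hxJ : x ∈ Submodule.span R (↑s : Set R) := by
      rw [hspan, hJ]
      exact Submodule.subset_span hx
    obtain ⟨fc, -, hfc⟩ := Submodule.mem_span_finset.mp hxJ
    refine ⟨fun a => projE 𝒜 (fc a), fun a _ => projE_mem 𝒜 (fc a), ?_⟩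
    calc x = projO 𝒜 x := (projO_eq_self 𝒜 ((mem_odd_iff 𝒜 x).mp hx)).symm
      _ = projO 𝒜 (∑ a ∈ s, fc a * a) := by
          rw [← hfc]
          rfl
      _ = ∑ a ∈ s, projO 𝒜 (fc a * a) := map_sum _ _ _
      _ = ∑ a ∈ s, projE 𝒜 (fc a) * a :=
          Finset.sum_congr rfl fun a ha =>
            mulO 𝒜 (fc a) a ((mem_odd_iff 𝒜 a).mp (hsub ha))
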